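/- Let x ∈ (-1, 0] and a ∈ [0, 1). Then P(a,x) := 2 + 4ax + 4a + x - 2a^2x^2 - 5a^2x - 2a^2 - 2ax^2 > 0. -/
import Mathlib


/-- For `x ∈ (-1, 0]` and `a ∈ [0, 1)`:
`P(a,x) = 2 + 4ax + 4a + x - 2a²x² - 5a²x - 2a² - 2ax² > 0`. -/
theorem P_positive (x a : ℝ) (hx₁ : -1 < x) (hx₂ : x ≤ 0) (ha₁ : 0 ≤ a) (ha₂ : a < 1) :
    2 + 4 * a * x + 4 * a + x - 2 * a ^ 2 * x ^ 2 - 5 * a ^ 2 * x - 2 * a ^ 2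
      - 2 * a * x ^ 2 > 0 := by
  have h1 : (0:ℝ) < 1 + x := by linarith
  have h2 : (0:ℝ) < 1 + 6*a - 3*a^2 - 2*a*(a+1)*x := by
    nlinarith [mul_nonneg (mul_nonneg ha₁ (by linarith : (0:ℝ) ≤ a+1)) (neg_nonneg.2 hx₂)]
  nlinarith [mul_pos h1 h2, sq_nonneg (1-a)]
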